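/- Uniqueness of subexponential harmonic extensions: let ψ and φ be P-harmonic functions on V agreeing on V_1, each satisfying the growth bound |f(v)| ≤ B β^n whenever d(𝟙, v) ≤ n, with 1 ≤ β < 1/(1−α'), where the hitting time T of V_1 satisfies P_u(T ≥ m) ≤ A(1−α')^m. Then ψ = φ on all of V. -/

import Mathlib

/-- The probability weight of a walk under simple random walk. -/
noncomputable def walkWeight {V : Type*} (G : SimpleGraph V)
    [∀ v : V, Fintype (G.neighborSet v)] {u v : V} (p : G.Walk u v) : ℝ :=
  ∏ i ∈ Finset.range p.length, (1 : ℝ) / (G.degree (p.getVert i))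

/-- `avoidProb₀ G V₁ u n`: the probability that the simple random walk started at `u`
stays outside `V₁` at all times `0, 1, …, n`; thus `P_u(T ≥ m) = avoidProb₀ G V₁ u (m−1)`
where `T = inf {n ≥ 0 : X_n ∈ V₁}`. -/
noncomputable def avoidProb₀ {V : Type*} (G : SimpleGraph V)
    [∀ v : V, Fintype (G.neighborSet v)] (V₁ : Set V) (u : V) (n : ℕ) : ℝ :=
  ∑' p : {p : Σ v : V, G.Walk u v // p.2.length = n ∧
      ∀ i, i ≤ n → p.2.getVert i ∉ V₁}, walkWeight G p.val.2



open SimpleGraph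

section Aux

variable {V : Type*} (G : SimpleGraph V) [∀ v : V, Fintype (G.neighborSet v)] (V₁ : Set V)

/-- Walks of given length from `u` avoiding `V₁` at all times `0..n`. -/
abbrev AW (u : V) (n : ℕ) : Type _ :=
  {p : Σ v : V, G.Walk u v // p.2.length = n ∧ ∀ i, i ≤ n → p.2.getVert i ∉ V₁}

lemma finite_lenWalks (n : ℕ) : ∀ u : V, Finite {p : Σ v : V, G.Walk u v // p.2.length = n} := by
  induction n with
  | zero =>
    intro u
    have : Subsingleton {p : Σ v : V, G.Walk u v // p.2.length = 0} := by
      constructor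
      rintro ⟨⟨v, w⟩, h⟩ ⟨⟨v', w'⟩, h'⟩
      cases w with
      | nil =>
        cases w' with
        | nil => rfl
        | cons h q => simp at h'
      | cons h q => simp at h
    exact Finite.of_subsingleton
  | succ n ih =>
    intro u
    have : ∀ v : G.neighborSet u, Finite {p : Σ w : V, G.Walk (v : V) w // p.2.length = n} :=
      fun v => ih v
    let F : (Σ v : G.neighborSet u, {p : Σ w : V, G.Walk (v : V) w // p.2.length = n}) →
        {p : Σ w : V, G.Walk u w // p.2.length = n + 1} :=
      fun x => ⟨⟨x.2.val.1, Walk.cons x.1.2 x.2.val.2⟩, by show x.2.val.2.length + 1 = n + 1; rw [x.2.2]⟩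
    apply Finite.of_surjective F
    rintro ⟨⟨w, p⟩, hp⟩
    cases p with
    | nil => simp at hp
    | cons h q =>
      exact ⟨⟨⟨_, h⟩, ⟨⟨w, q⟩, by simpa using hp⟩⟩, rfl⟩

instance AW.finite (u : V) (n : ℕ) : Finite (AW G V₁ u n) := by
  have := finite_lenWalks G n u
  exact Finite.of_injective
    (fun p => (⟨p.1, p.2.1⟩ : {p : Σ v : V, G.Walk u v // p.2.length = n}))
    (by intro a b h
        apply Subtype.ext
        have := congrArg (Subtype.val (p := fun p : Σ v : V, G.Walk u v => p.2.length = n)) h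
        exact this)

lemma walkWeight_nonneg {u v : V} (p : G.Walk u v) : 0 ≤ walkWeight G p :=
  Finset.prod_nonneg fun i _ => by positivity

end Aux

section Aux2

variable {V : Type*} (G : SimpleGraph V) [∀ v : V, Fintype (G.neighborSet v)] (V₁ : Set V)

lemma walkWeight_cons {u v w : V} (h : G.Adj u v) (q : G.Walk v w) :
    walkWeight G (Walk.cons h q) = (1 / (G.degree u : ℝ)) * walkWeight G q := by
  unfold walkWeight
  rw [Walk.length_cons, Finset.prod_range_succ']
  rw [show (Walk.cons h q).getVert 0 = u from Walk.getVert_zero _]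
  simp only [Walk.getVert_cons_succ]
  exact mul_comm _ _

lemma tsum_AW_eq (f : V → ℝ) (hdeg : ∀ v : V, 0 < G.degree v)
    (hharm : ∀ u ∉ V₁, (G.degree u : ℝ) * f u = ∑ v ∈ G.neighborFinset u, f v)
    (hzero : ∀ v ∈ V₁, f v = 0) :
    ∀ n : ℕ, ∀ u : V, (∑' p : AW G V₁ u n, walkWeight G p.val.2 * f p.val.1) = f u := by
  intro n
  induction n with
  | zero =>
    intro u
    by_cases hu : u ∈ V₁
    · have : IsEmpty (AW G V₁ u 0) := by
        constructor
        rintro ⟨⟨v, w⟩, hlen, havd⟩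
        exact havd 0 le_rfl (by rwa [Walk.getVert_zero])
      rw [tsum_empty, hzero u hu]
    · rw [tsum_eq_single (⟨⟨u, Walk.nil⟩, rfl, fun i _ => by
          have : (Walk.nil : G.Walk u u).getVert i = u := rfl
          rwa [this]⟩ : AW G V₁ u 0)]
      · show walkWeight G (Walk.nil : G.Walk u u) * f u = f u
        simp [walkWeight]
      · rintro ⟨⟨v, w⟩, hlen, havd⟩ hb
        exfalso
        apply hb
        cases w with
        | nil =>
          rfl
        | cons h q => simp at hlen
  | succ n ih =>
    intro u
    by_cases hu : u ∈ V₁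
    · have : IsEmpty (AW G V₁ u (n + 1)) := by
        constructor
        rintro ⟨⟨v, w⟩, hlen, havd⟩
        exact havd 0 (by omega) (by rwa [Walk.getVert_zero])
      rw [tsum_empty, hzero u hu]
    · let F : (Σ v : G.neighborSet u, AW G V₁ (v : V) n) → AW G V₁ u (n + 1) :=
        fun x => ⟨⟨x.2.val.1, Walk.cons x.1.2 x.2.val.2⟩, by show x.2.val.2.length + 1 = n + 1; rw [x.2.2.1], by
          intro i hi
          match i with
          | 0 => rwa [Walk.getVert_zero]
          | (j + 1) =>
            show x.2.val.2.getVert j ∉ V₁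
            exact x.2.2.2 j (by omega)⟩
      have hbij : Function.Bijective F := by
        constructor
        · rintro ⟨⟨v, hv⟩, ⟨⟨w, q⟩, hq⟩⟩ ⟨⟨v', hv'⟩, ⟨⟨w', q'⟩, hq'⟩⟩ h
          have h1 := congrArg (Subtype.val (p := fun p : Σ x : V, G.Walk u x =>
            p.2.length = n + 1 ∧ ∀ i, i ≤ n + 1 → p.2.getVert i ∉ V₁)) h
          simp only [F] at h1
          obtain ⟨rfl, h2⟩ := Sigma.mk.inj_iff.mp h1
          have h3 := eq_of_heq h2
          replace h3 := Walk.cons.inj h3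
          obtain ⟨rfl, h4⟩ := h3
          have h5 := eq_of_heq h4
          subst h5
          rfl
        · rintro ⟨⟨w, p⟩, hlen, havd⟩
          cases p with
          | nil => simp at hlen
          | cons h q =>
            refine ⟨⟨⟨_, h⟩, ⟨⟨w, q⟩, by simpa using hlen, fun i hi => ?_⟩⟩, rfl⟩
            have := havd (i + 1) (by omega)
            rwa [Walk.getVert_cons_succ] at this
      haveI : ∀ v : G.neighborSet u, Finite (AW G V₁ (v : V) n) := fun v => AW.finite G V₁ _ n
      calc (∑' p : AW G V₁ u (n+1), walkWeight G p.val.2 * f p.val.1)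
          = ∑' x : (Σ v : G.neighborSet u, AW G V₁ (v : V) n),
              walkWeight G (F x).val.2 * f (F x).val.1 :=
            ((Equiv.ofBijective F hbij).tsum_eq _).symm
        _ = ∑' (v : G.neighborSet u) (q : AW G V₁ (v : V) n),
              walkWeight G (F ⟨v, q⟩).val.2 * f (F ⟨v, q⟩).val.1 :=
            Summable.tsum_sigma' (fun b => Summable.of_finite) Summable.of_finite
        _ = ∑' (v : G.neighborSet u), (1 / (G.degree u : ℝ)) * f (v : V) := by
            refine tsum_congr fun v => ?_
            have : ∀ q : AW G V₁ (v : V) n,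
                walkWeight G (F ⟨v, q⟩).val.2 * f (F ⟨v, q⟩).val.1
                = (1 / (G.degree u : ℝ)) * (walkWeight G q.val.2 * f q.val.1) := by
              intro q
              show walkWeight G (Walk.cons v.2 q.val.2) * f q.val.1 = _
              linear_combination f q.val.1 * walkWeight_cons G v.2 q.val.2
            rw [tsum_congr this, tsum_mul_left, ih]
        _ = (1 / (G.degree u : ℝ)) * ∑ v ∈ G.neighborFinset u, f v := by
            rw [tsum_fintype, Finset.mul_sum]
            rw [SimpleGraph.neighborFinset_def, ← Finset.sum_set_coe]
        _ = f u := by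
            rw [← hharm u hu]
            have : (G.degree u : ℝ) ≠ 0 := by
              exact_mod_cast (hdeg u).ne'
            field_simp

lemma abs_tsum_AW_le (f : V → ℝ) (u : V) (n : ℕ) (C : ℝ)
    (hC : ∀ p : AW G V₁ u n, |f p.val.1| ≤ C) :
    |∑' p : AW G V₁ u n, walkWeight G p.val.2 * f p.val.1| ≤ C * avoidProb₀ G V₁ u n := by
  haveI : Finite (AW G V₁ u n) := AW.finite G V₁ u n
  have h1 : |∑' p : AW G V₁ u n, walkWeight G p.val.2 * f p.val.1|
      ≤ ∑' p : AW G V₁ u n, |walkWeight G p.val.2 * f p.val.1| :=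
    by simpa only [Real.norm_eq_abs] using
      norm_tsum_le_tsum_norm (f := fun p : AW G V₁ u n => walkWeight G p.val.2 * f p.val.1)
        Summable.of_finite
  have h2 : (∑' p : AW G V₁ u n, |walkWeight G p.val.2 * f p.val.1|)
      ≤ ∑' p : AW G V₁ u n, C * walkWeight G p.val.2 := by
    refine Summable.tsum_le_tsum (fun p => ?_) Summable.of_finite Summable.of_finite
    rw [abs_mul, abs_of_nonneg (walkWeight_nonneg G _)]
    calc walkWeight G p.val.2 * |f p.val.1| ≤ walkWeight G p.val.2 * C := by
          exact mul_le_mul_of_nonneg_left (hC p) (walkWeight_nonneg G _)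
      _ = C * walkWeight G p.val.2 := mul_comm _ _
  calc |∑' p : AW G V₁ u n, walkWeight G p.val.2 * f p.val.1|
      ≤ ∑' p : AW G V₁ u n, C * walkWeight G p.val.2 := h1.trans h2
    _ = C * avoidProb₀ G V₁ u n := tsum_mul_left

end Aux2


/-- Uniqueness of subexponential harmonic extensions: two functions harmonic off `V₁`,
agreeing on `V₁`, and growing at most like `B β^n` with `1 ≤ β < 1/(1−α')`, where the
hitting time `T` of `V₁` has tail `P_u(T ≥ m) ≤ A(1−α')^m`, must coincide everywhere. -/
theorem harmonic_extension_unique {V : Type*} (G : SimpleGraph V)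
    [∀ v : V, Fintype (G.neighborSet v)] (hconn : G.Connected)
    (hdeg : ∀ v : V, 0 < G.degree v) (V₁ : Set V) (o : V)
    (α' A : ℝ) (hα' : 0 < α') (hα'' : α' < 1)
    (htail : ∀ m : ℕ, 1 ≤ m → ∀ u : V, avoidProb₀ G V₁ u (m - 1) ≤ A * (1 - α') ^ m)
    (β B : ℝ) (hβ : 1 ≤ β) (hβ' : β < 1 / (1 - α'))
    (ψ φ : V → ℝ)
    (hψharm : ∀ u ∉ V₁, (G.degree u : ℝ) * ψ u = ∑ v ∈ G.neighborFinset u, ψ v)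
    (hφharm : ∀ u ∉ V₁, (G.degree u : ℝ) * φ u = ∑ v ∈ G.neighborFinset u, φ v)
    (hψgrow : ∀ n : ℕ, 1 ≤ n → ∀ v : V, G.dist o v ≤ n → |ψ v| ≤ B * β ^ n)
    (hφgrow : ∀ n : ℕ, 1 ≤ n → ∀ v : V, G.dist o v ≤ n → |φ v| ≤ B * β ^ n)
    (hagree : ∀ v ∈ V₁, ψ v = φ v) :
    ψ = φ := by
  have hβ0 : (0 : ℝ) < β := lt_of_lt_of_le one_pos hβ
  have h1α : (0 : ℝ) < 1 - α' := by linarith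
  have hB : 0 ≤ B := by
    have h := hψgrow 1 le_rfl o (by rw [SimpleGraph.dist_self]; omega)
    nlinarith [abs_nonneg (ψ o)]
  set f : V → ℝ := fun v => ψ v - φ v with hf
  have hharm : ∀ u ∉ V₁, (G.degree u : ℝ) * f u = ∑ v ∈ G.neighborFinset u, f v := by
    intro u hu
    simp only [hf, mul_sub, Finset.sum_sub_distrib, hψharm u hu, hφharm u hu]
  have hzero : ∀ v ∈ V₁, f v = 0 := fun v hv => by simp [hf, hagree v hv]
  have key := tsum_AW_eq G V₁ f hdeg hharm hzero
  have hr0 : (0 : ℝ) ≤ β * (1 - α') := by positivity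
  have hr1 : β * (1 - α') < 1 := by
    rwa [lt_div_iff₀ h1α] at hβ'
  funext u
  have hmain : f u = 0 := by
    set d : ℕ := G.dist o u with hd
    set K : ℝ := 2 * B * β ^ (d + 1) * (A * (1 - α')) with hK
    have hbound : ∀ n : ℕ, |f u| ≤ K * (β * (1 - α')) ^ n := by
      intro n
      have hC : ∀ p : AW G V₁ u n, |f p.val.1| ≤ 2 * B * β ^ (d + n + 1) := by
        rintro ⟨⟨v, w⟩, hlen, -⟩
        have hlen' : w.length = n := hlen
        have hdist : G.dist o v ≤ d + n + 1 := by
          have h1 : G.dist o v ≤ G.dist o u + G.dist u v := hconn.dist_triangle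
          have h2 : G.dist u v ≤ w.length := SimpleGraph.dist_le w
          rw [hlen'] at h2
          omega
        have hψ := hψgrow (d + n + 1) (by omega) v hdist
        have hφ := hφgrow (d + n + 1) (by omega) v hdist
        calc |f v| ≤ |ψ v| + |φ v| := abs_sub _ _
          _ ≤ 2 * B * β ^ (d + n + 1) := by linarith
      have h1 : |f u| ≤ 2 * B * β ^ (d + n + 1) * avoidProb₀ G V₁ u n := by
        rw [← key n u]
        exact abs_tsum_AW_le G V₁ f u n _ hC
      have h2 : avoidProb₀ G V₁ u n ≤ A * (1 - α') ^ (n + 1) := by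
        have := htail (n + 1) (by omega) u
        simpa using this
      have h3 : (0 : ℝ) ≤ 2 * B * β ^ (d + n + 1) := by positivity
      have h4 : |f u| ≤ 2 * B * β ^ (d + n + 1) * (A * (1 - α') ^ (n + 1)) :=
        h1.trans (mul_le_mul_of_nonneg_left h2 h3)
      calc |f u| ≤ 2 * B * β ^ (d + n + 1) * (A * (1 - α') ^ (n + 1)) := h4
        _ = K * (β * (1 - α')) ^ n := by
            rw [hK, mul_pow, pow_add, pow_add, pow_succ]
            ring
    have hlim : Filter.Tendsto (fun n : ℕ => K * (β * (1 - α')) ^ n)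
        Filter.atTop (nhds 0) := by
      simpa using (tendsto_pow_atTop_nhds_zero_of_lt_one hr0 hr1).const_mul K
    have : |f u| ≤ 0 := ge_of_tendsto hlim (Filter.Eventually.of_forall hbound)
    exact abs_eq_zero.mp (le_antisymm this (abs_nonneg _))
  have := sub_eq_zero.mp hmain
  exact this
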